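/- Let k ∈ ℕ, let λ and μ be partitions with λ^T_1 + μ_1 ≤ k + 1, and define τ^λ_μ = (ρ(k) + 2μ^T)^T + 2λ, where partition addition is componentwise and ^T denotes conjugation. Then τ^λ_μ is a partition, and |τ^λ_μ| = k(k+1)/2 + 2|λ| + 2|μ|. -/

import Mathlib

open scoped BigOperators

/-- The conjugate of a partition `p` (0-indexed): `(p^T)_{j+1} = #{i : p_i ≥ j+1}`. -/
noncomputable def conjPart (p : ℕ → ℕ) (j : ℕ) : ℕ := Set.ncard {i : ℕ | j + 1 ≤ p i}

/-- The 2-separated partition `τ^λ_μ = (ρ(k) + 2μ^T)^T + 2λ`, with `ρ(k)` the staircase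
`(k, k-1, …, 1)` (0-indexed: `ρ(k)_i = k - i`) and componentwise addition. -/
noncomputable def tauP (k : ℕ) (lam mu : ℕ → ℕ) : ℕ → ℕ :=
  fun i => conjPart (fun j => (k - j) + 2 * conjPart mu j) i + 2 * lam i

lemma conjPart_eq_card (p : ℕ → ℕ) (N : ℕ) (hN : ∀ i ≥ N, p i = 0) (j : ℕ) :
    conjPart p j = ((Finset.range N).filter (fun i => j + 1 ≤ p i)).card := by
  have hset : {i : ℕ | j + 1 ≤ p i}
      = ↑((Finset.range N).filter (fun i => j + 1 ≤ p i)) := by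
    ext i
    simp only [Set.mem_setOf_eq, Finset.coe_filter, Finset.mem_range, Set.mem_setOf_eq]
    constructor
    · intro h
      refine ⟨?_, h⟩
      by_contra hc
      have := hN i (by omega)
      omega
    · exact fun h => h.2
  rw [conjPart, hset, Set.ncard_coe_finset]

lemma conjPart_antitone (p : ℕ → ℕ) (N : ℕ) (hN : ∀ i ≥ N, p i = 0) :
    Antitone (conjPart p) := by
  intro a b hab
  rw [conjPart_eq_card p N hN, conjPart_eq_card p N hN]
  apply Finset.card_le_card
  intro i hi
  simp only [Finset.mem_filter, Finset.mem_range] at hi ⊢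
  exact ⟨hi.1, by omega⟩

lemma conjPart_le (p : ℕ → ℕ) (N : ℕ) (hN : ∀ i ≥ N, p i = 0) (j : ℕ) :
    conjPart p j ≤ N := by
  rw [conjPart_eq_card p N hN]
  exact (Finset.card_filter_le _ _).trans (by simp)

lemma conjPart_eq_zero (p : ℕ → ℕ) (B : ℕ) (hB : ∀ i, p i ≤ B) (j : ℕ) (hj : B ≤ j) :
    conjPart p j = 0 := by
  have : {i : ℕ | j + 1 ≤ p i} = ∅ := by
    ext i
    simp only [Set.mem_setOf_eq, Set.mem_empty_iff_false, iff_false]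
    have := hB i
    omega
  rw [conjPart, this, Set.ncard_empty]

lemma sum_conjPart (p : ℕ → ℕ) (N M : ℕ) (hN : ∀ i ≥ N, p i = 0) (hM : ∀ i, p i ≤ M) :
    ∑ j ∈ Finset.range M, conjPart p j = ∑ i ∈ Finset.range N, p i := by
  have h1 : ∀ j, conjPart p j
      = ∑ i ∈ Finset.range N, (if j + 1 ≤ p i then 1 else 0) := by
    intro j
    rw [conjPart_eq_card p N hN, Finset.card_filter]
  simp_rw [h1]
  rw [Finset.sum_comm]
  refine Finset.sum_congr rfl fun i _ => ?_
  have h2 : (Finset.range M).filter (fun j => j + 1 ≤ p i) = Finset.range (p i) := by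
    ext j
    simp only [Finset.mem_filter, Finset.mem_range]
    have := hM i
    omega
  calc ∑ j ∈ Finset.range M, (if j + 1 ≤ p i then 1 else 0)
      = ((Finset.range M).filter (fun j => j + 1 ≤ p i)).card := by
        rw [Finset.card_filter]
    _ = p i := by rw [h2, Finset.card_range]

lemma sum_staircase (k : ℕ) : ∑ j ∈ Finset.range k, (k - j) = k * (k + 1) / 2 := by
  have hr : ∑ j ∈ Finset.range k, (k - j) = ∑ j ∈ Finset.range k, (j + 1) := by
    rw [← Finset.sum_range_reflect (fun j => j + 1) k]
    refine Finset.sum_congr rfl fun j hj => ?_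
    simp only [Finset.mem_range] at hj
    omega
  have hs : ∑ j ∈ Finset.range (k + 1), j = ∑ j ∈ Finset.range k, (j + 1) := by
    rw [Finset.sum_range_succ' (fun j => j) k]; simp
  have h2 : (∑ j ∈ Finset.range (k + 1), j) * 2 = (k + 1) * k :=
    Finset.sum_range_id_mul_two (k + 1)
  have : (∑ j ∈ Finset.range k, (k - j)) * 2 = k * (k + 1) := by
    rw [hr, ← hs, h2]; ring
  omega

/-- for partitions `λ, μ` with `λ^T_1 + μ_1 ≤ k + 1`, the sequence
`τ^λ_μ` is a partition (antitone, finitely supported) and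
`|τ^λ_μ| = k(k+1)/2 + 2|λ| + 2|μ|`. -/
theorem stmt2 (k : ℕ) (lam mu : ℕ → ℕ)
    (hlam : Antitone lam) (hmu : Antitone mu)
    (Nl Nm : ℕ) (hNl : ∀ i ≥ Nl, lam i = 0) (hNm : ∀ i ≥ Nm, mu i = 0)
    (hsep : conjPart lam 0 + mu 0 ≤ k + 1) :
    Antitone (tauP k lam mu) ∧
    ∃ M : ℕ, (∀ i ≥ M, tauP k lam mu i = 0) ∧
      ∑ i ∈ Finset.range M, tauP k lam mu i
        = k * (k + 1) / 2 + 2 * (∑ i ∈ Finset.range Nl, lam i)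
            + 2 * (∑ i ∈ Finset.range Nm, mu i) := by
  set Smu := ∑ i ∈ Finset.range Nm, mu i with hSmu
  -- uniform bound on mu
  have hmuB : ∀ i, mu i ≤ Smu := by
    intro i
    rcases lt_or_ge i Nm with h | h
    · exact Finset.single_le_sum (f := mu) (fun _ _ => Nat.zero_le _) (Finset.mem_range.mpr h)
    · rw [hNm i h]; exact Nat.zero_le _
  set g : ℕ → ℕ := fun j => (k - j) + 2 * conjPart mu j with hg
  set Ng := k + Smu with hNg
  have hgN : ∀ j ≥ Ng, g j = 0 := by
    intro j hj
    have h1 : conjPart mu j = 0 := conjPart_eq_zero mu Smu hmuB j (by omega)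
    simp only [hg, h1]
    omega
  set Mg := k + 2 * Nm with hMg
  have hgB : ∀ j, g j ≤ Mg := by
    intro j
    have := conjPart_le mu Nm hNm j
    simp only [hg, hMg]
    omega
  constructor
  · intro a b hab
    simp only [tauP]
    have h1 := conjPart_antitone g Ng hgN hab
    have h2 := hlam hab
    simp only [hg] at h1
    omega
  · refine ⟨Mg + Nl, fun i hi => ?_, ?_⟩
    · have h1 : conjPart g i = 0 := conjPart_eq_zero g Mg hgB i (by omega)
      have h2 : lam i = 0 := hNl i (by omega)
      simp only [tauP, ← hg, h1, h2]
    · have hsplit : ∑ i ∈ Finset.range (Mg + Nl), tauP k lam mu i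
          = (∑ i ∈ Finset.range (Mg + Nl), conjPart g i)
            + 2 * ∑ i ∈ Finset.range (Mg + Nl), lam i := by
        simp only [tauP, ← hg]
        rw [Finset.sum_add_distrib, Finset.mul_sum]
      have hconj : ∑ i ∈ Finset.range (Mg + Nl), conjPart g i
          = ∑ j ∈ Finset.range Ng, g j :=
        sum_conjPart g Ng (Mg + Nl) hgN (fun j => (hgB j).trans (by omega))
      have hgsum : ∑ j ∈ Finset.range Ng, g j
          = (∑ j ∈ Finset.range Ng, (k - j)) + 2 * ∑ j ∈ Finset.range Ng, conjPart mu j := by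
        simp only [hg]
        rw [Finset.sum_add_distrib, Finset.mul_sum]
      have hstair : ∑ j ∈ Finset.range Ng, (k - j) = k * (k + 1) / 2 := by
        rw [← sum_staircase k]
        symm
        apply Finset.sum_subset (Finset.range_subset_range.mpr (by omega))
        intro j _ hj
        simp only [Finset.mem_range, not_lt] at hj
        omega
      have hcm : ∑ j ∈ Finset.range Ng, conjPart mu j = Smu :=
        sum_conjPart mu Nm Ng hNm (fun i => (hmuB i).trans (by omega))
      have hlsum : ∑ i ∈ Finset.range (Mg + Nl), lam i = ∑ i ∈ Finset.range Nl, lam i := by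
        symm
        apply Finset.sum_subset (Finset.range_subset_range.mpr (by omega))
        intro j _ hj
        simp only [Finset.mem_range, not_lt] at hj
        exact hNl j hj
      rw [hsplit, hconj, hgsum, hstair, hcm, hlsum]
      ring
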